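/- arXiv:1609.08868 — 2 statements merged into one kernel-verified Lean document; each statement's English description precedes it below -/
import Mathlib

section
/- Let a_1, ..., a_N be positive reals and let A_i = a_1 + ... + a_i. Then the sum over i from 1 to N of a_i / A_i is at most 1 + ln(A_N / a_1). -/
lemma aux_stmt4 (b : ℕ → ℝ) : ∀ n, 0 < n → (∀ k < n, 0 < b k) →
    ∑ k ∈ Finset.range n, b k / (∑ j ∈ Finset.range (k+1), b j) ≤
      1 + Real.log (∑ j ∈ Finset.range n, b j) - Real.log (b 0) := by
  intro n
  induction n with
  | zero => intro h; exact absurd h (lt_irrefl 0)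
  | succ m ih =>
    intro _ hb
    rcases Nat.eq_zero_or_pos m with hm | hm
    · subst hm
      simp only [Nat.zero_add, Finset.sum_range_one]
      have h0 : 0 < b 0 := hb 0 (by norm_num)
      rw [div_self h0.ne']
      linarith
    · have hbm : ∀ k < m, 0 < b k := fun k hk => hb k (hk.trans (Nat.lt_succ_self m))
      have hSm : 0 < ∑ j ∈ Finset.range m, b j :=
        Finset.sum_pos (fun j hj => hbm j (Finset.mem_range.mp hj)) (by
          simpa using hm.ne')
      have hSm1 : 0 < ∑ j ∈ Finset.range (m+1), b j :=
        Finset.sum_pos (fun j hj => hb j (Finset.mem_range.mp hj)) (by simp)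
      have key : b m / (∑ j ∈ Finset.range (m+1), b j) ≤
          Real.log (∑ j ∈ Finset.range (m+1), b j) - Real.log (∑ j ∈ Finset.range m, b j) := by
        have h1 : Real.log ((∑ j ∈ Finset.range m, b j) / (∑ j ∈ Finset.range (m+1), b j)) ≤
            (∑ j ∈ Finset.range m, b j) / (∑ j ∈ Finset.range (m+1), b j) - 1 :=
          Real.log_le_sub_one_of_pos (div_pos hSm hSm1)
        rw [Real.log_div hSm.ne' hSm1.ne'] at h1
        have h2 : b m / (∑ j ∈ Finset.range (m+1), b j) =
            1 - (∑ j ∈ Finset.range m, b j) / (∑ j ∈ Finset.range (m+1), b j) := by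
          rw [eq_sub_iff_add_eq, ← add_div, div_eq_one_iff_eq hSm1.ne']
          rw [Finset.sum_range_succ]; ring
        rw [h2]; linarith
      rw [Finset.sum_range_succ]
      have := ih hm hbm
      linarith

theorem stmt_4 (N : ℕ) (hN : 0 < N) (a : Fin N → ℝ) (ha : ∀ i, 0 < a i) :
    ∑ i : Fin N, a i / (∑ j ∈ Finset.Iic i, a j) ≤
      1 + Real.log ((∑ i : Fin N, a i) / a ⟨0, hN⟩) := by
  set b : ℕ → ℝ := fun k => if h : k < N then a ⟨k, h⟩ else 1 with hbdef
  have hb : ∀ k < N, 0 < b k := by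
    intro k hk; simp only [hbdef, hk, dif_pos]; exact ha _
  have hIic : ∀ i : Fin N, ∑ j ∈ Finset.Iic i, a j = ∑ j ∈ Finset.range (i.1+1), b j := by
    intro i
    have h1 : Finset.range (i.1+1) = Finset.Iic (i.1) := by
      ext k; simp [Nat.lt_succ_iff]
    rw [h1, ← Fin.map_valEmbedding_Iic, Finset.sum_map]
    refine Finset.sum_congr rfl (fun j _ => ?_)
    simp [hbdef, j.2]
  have huniv : ∑ i : Fin N, a i = ∑ j ∈ Finset.range N, b j := by
    rw [← Fin.sum_univ_eq_sum_range b N]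
    exact Finset.sum_congr rfl (fun i _ => by simp [hbdef, i.2])
  have hmain : ∑ i : Fin N, a i / (∑ j ∈ Finset.Iic i, a j) =
      ∑ k ∈ Finset.range N, b k / (∑ j ∈ Finset.range (k+1), b j) := by
    rw [← Fin.sum_univ_eq_sum_range (fun k => b k / (∑ j ∈ Finset.range (k+1), b j)) N]
    refine Finset.sum_congr rfl (fun i _ => ?_)
    rw [hIic i]
    congr 1
    simp [hbdef, i.2]
  have hb0 : b 0 = a ⟨0, hN⟩ := by simp [hbdef, hN]
  have ha0 : (0:ℝ) < a ⟨0, hN⟩ := ha _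
  have hSN : 0 < ∑ i : Fin N, a i := Finset.sum_pos (fun i _ => ha i) ⟨⟨0, hN⟩, Finset.mem_univ _⟩
  rw [hmain, Real.log_div hSN.ne' ha0.ne', huniv, ← hb0]
  have := aux_stmt4 b N hN hb
  linarith
end

section
/- Let a_1, ..., a_N be positive reals summing to 1, with each a_i ≥ g^n for some 0 < g ≤ 1 and positive integer n. Then the sum over i from 1 to N of a_i / (a_1 + ... + a_i) is at most 1 + n·ln(1/g). -/
lemma key_step (b c : ℝ) (hb : 0 < b) (hc : 0 < c) :
    c / (b + c) ≤ Real.log (b + c) - Real.log b := by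
  have hbc : 0 < b + c := by linarith
  have h := Real.log_le_sub_one_of_pos (show 0 < b / (b + c) by positivity)
  rw [Real.log_div hb.ne' hbc.ne'] at h
  have : b / (b + c) - 1 = -(c / (b + c)) := by field_simp; ring
  linarith [this ▸ h]

theorem stmt_5 (N : ℕ) (hN : 0 < N) (a : Fin N → ℝ) (ha : ∀ i, 0 < a i)
    (hsum : ∑ i : Fin N, a i = 1) (g : ℝ) (hg0 : 0 < g) (hg1 : g ≤ 1)
    (n : ℕ) (hn : 0 < n) (hlb : ∀ i, g ^ n ≤ a i) :
    ∑ i : Fin N, a i / (∑ j ∈ Finset.Iic i, a j) ≤ 1 + n * Real.log (1 / g) := by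
  set a' : ℕ → ℝ := fun k => if h : k < N then a ⟨k, h⟩ else 1 with ha'
  have ha'pos : ∀ k, 0 < a' k := by
    intro k; simp only [ha']; split
    · exact ha _
    · norm_num
  set S : ℕ → ℝ := fun k => ∑ j ∈ Finset.range k, a' j with hS
  have hSpos : ∀ k, 0 < k → 0 < S k := by
    intro k hk
    exact Finset.sum_pos (fun i _ => ha'pos i) (by simpa using Finset.nonempty_range_iff.mpr hk.ne')
  -- telescoping induction
  have main : ∀ m, 1 ≤ m →
      ∑ k ∈ Finset.range m, a' k / S (k + 1) ≤ 1 + Real.log (S m) - Real.log (S 1) := by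
    intro m hm
    induction m with
    | zero => omega
    | succ m ih =>
      rcases Nat.eq_or_lt_of_le hm with h1 | h1
      · have : m = 0 := by omega
        subst this
        simp only [zero_add, Finset.sum_range_one]
        have hS1 : S 1 = a' 0 := by simp [hS, Finset.sum_range_one]
        rw [hS1, div_self (ha'pos 0).ne']
        linarith
      · have hm1 : 1 ≤ m := by omega
        have ihm := ih hm1
        rw [Finset.sum_range_succ]
        have hstep : a' m / S (m + 1) ≤ Real.log (S (m + 1)) - Real.log (S m) := by
          have hSm : S (m + 1) = S m + a' m := by
            simp [hS, Finset.sum_range_succ]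
          rw [hSm]
          exact key_step (S m) (a' m) (hSpos m hm1) (ha'pos m)
        linarith
  -- rewrite sum
  have hrw : ∑ i : Fin N, a i / (∑ j ∈ Finset.Iic i, a j)
      = ∑ k ∈ Finset.range N, a' k / S (k + 1) := by
    rw [← Fin.sum_univ_eq_sum_range]
    apply Finset.sum_congr rfl
    intro i _
    have h1 : a' (i : ℕ) = a i := by simp [ha', i.isLt]
    have h2 : (∑ j ∈ Finset.Iic i, a j) = S ((i : ℕ) + 1) := by
      simp only [hS]
      rw [show Finset.range ((i : ℕ) + 1) = Finset.Iic (i : ℕ) by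
        rw [← Nat.Iio_eq_range]; ext k; simp [Nat.lt_succ_iff]]
      rw [← Fin.map_valEmbedding_Iic, Finset.sum_map]
      apply Finset.sum_congr rfl
      intro j hj
      have hjN : (j : ℕ) < N := j.isLt
      simp [ha', hjN]
    rw [h1, h2]
  rw [hrw]
  have hm := main N hN
  have hSN : S N = 1 := by
    simp only [hS]
    rw [← Fin.sum_univ_eq_sum_range, ← hsum]
    exact Finset.sum_congr rfl (fun i _ => by simp [ha', i.isLt])
  have hS1 : S 1 = a ⟨0, hN⟩ := by simp [hS, Finset.sum_range_one, ha', hN]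
  have hlog : Real.log (g ^ n) ≤ Real.log (a ⟨0, hN⟩) :=
    Real.log_le_log (pow_pos hg0 n) (hlb _)
  rw [Real.log_pow] at hlog
  have hinv : Real.log (1 / g) = -Real.log g := by
    rw [one_div, Real.log_inv]
  calc ∑ k ∈ Finset.range N, a' k / S (k + 1)
      ≤ 1 + Real.log (S N) - Real.log (S 1) := hm
    _ = 1 - Real.log (a ⟨0, hN⟩) := by rw [hSN, hS1, Real.log_one]; ring
    _ ≤ 1 + n * Real.log (1 / g) := by
        rw [hinv]
        push_cast at hlog ⊢
        linarith
end
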